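/- Let A be a finite dimensional algebra over an algebraically closed field and W a finite dimensional central A-bimodule. If ξ : w' → w → w'' is a non-split conflation in the bimodule category W-el, then there exists a conflation w' ⊕ w'' → w ⊕ w'' → w'', and dim End_W(w) < dim End_W(w' ⊕ w''). -/

import Mathlib

set_option linter.unusedSectionVars false

noncomputable section

section WEl

variable (k A W : Type) [Field k] [Ring A] [Algebra k A]
  [AddCommGroup W] [Module k W] [Module A W] [Module Aᵐᵒᵖ W]
  [SMulCommClass A Aᵐᵒᵖ W] [IsScalarTower k A W]

variable (P : Type) [AddCommGroup P] [Module k P] [Module A P] [IsScalarTower k A P]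

/-- The defining relations of the tensor product `W ⊗_A P`. -/
def wrel : Submodule k (TensorProduct k W P) :=
  Submodule.span k {x | ∃ (a : A) (v : W) (p : P),
    x = (MulOpposite.op a • v) ⊗ₜ[k] p - v ⊗ₜ[k] (a • p)}

/-- The tensor product `W ⊗_A P` over the (noncommutative) algebra `A`. -/
abbrev WT := TensorProduct k W P ⧸ wrel k A W P

/-- The elementary tensor `v ⊗ p` of `W ⊗_A P`. -/
def wmk (v : W) (p : P) : WT k A W P := Submodule.Quotient.mk (v ⊗ₜ[k] p)

/-- Left multiplication by `a : A` on `W`, as a `k`-linear map. -/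
def smulW (a : A) : W →ₗ[k] W where
  toFun := (a • ·)
  map_add' := smul_add a
  map_smul' c v := by
    simp only [RingHom.id_apply]
    rw [← algebraMap_smul A c v, ← algebraMap_smul A c (a • v), smul_smul, smul_smul,
      Algebra.commutes]

/-- The left `A`-action on `W ⊗_A P` (through the left action on `W`). -/
def tau (a : A) : WT k A W P →ₗ[k] WT k A W P :=
  Submodule.mapQ _ _ (LinearMap.rTensor P (smulW k A W a)) (by
    rw [wrel, Submodule.span_le]
    rintro x ⟨b, v, p, rfl⟩
    have : (LinearMap.rTensor P (smulW k A W a))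
        ((MulOpposite.op b • v) ⊗ₜ[k] p - v ⊗ₜ[k] (b • p))
        = (MulOpposite.op b • (a • v)) ⊗ₜ[k] p - (a • v) ⊗ₜ[k] (b • p) := by
      simp [smulW, smul_comm]
    rw [SetLike.mem_coe, Submodule.mem_comap, this]
    exact Submodule.subset_span ⟨b, a • v, p, rfl⟩)

lemma ksmul_comm {M : Type} [AddCommGroup M] [Module k M] [Module A M]
    [IsScalarTower k A M] (c : k) (a : A) (x : M) : c • a • x = a • c • x := by
  rw [← algebraMap_smul A c (a • x), ← algebraMap_smul A c x, smul_smul, smul_smul,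
    Algebra.commutes]

variable {P}
variable {P' : Type} [AddCommGroup P'] [Module k P'] [Module A P'] [IsScalarTower k A P']

/-- The map `1_W ⊗ α : W ⊗_A P → W ⊗_A P'` induced by an `A`-linear map `α`. -/
def tmap (α : P →ₗ[k] P') (hα : ∀ (a : A) (p : P), α (a • p) = a • α p) :
    WT k A W P →ₗ[k] WT k A W P' :=
  Submodule.mapQ _ _ (LinearMap.lTensor W α) (by
    rw [wrel, Submodule.span_le]
    rintro x ⟨b, v, p, rfl⟩
    have : (LinearMap.lTensor W α)
        ((MulOpposite.op b • v) ⊗ₜ[k] p - v ⊗ₜ[k] (b • p))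
        = (MulOpposite.op b • v) ⊗ₜ[k] (α p) - v ⊗ₜ[k] (b • α p) := by
      simp [hα]
    rw [SetLike.mem_coe, Submodule.mem_comap, this]
    exact Submodule.subset_span ⟨b, v, α p, rfl⟩)

lemma tmap_mk (α : P →ₗ[k] P') (hα : ∀ (a : A) (p : P), α (a • p) = a • α p)
    (v : W) (p : P) : tmap k A W α hα (wmk k A W P v p) = wmk k A W P' v (α p) := by
  simp [tmap, wmk, Submodule.mapQ_apply]

/-- The space of morphisms `(P, w) → (P', w')` in the bimodule category `W-el`:
`A`-linear maps `α : P → P'` with `(1 ⊗ α) ∘ w = w' ∘ α`. -/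
def HomW (w : P →ₗ[k] WT k A W P) (w' : P' →ₗ[k] WT k A W P') :
    Submodule k (P →ₗ[k] P') where
  carrier := {α | ∃ h : ∀ (a : A) (p : P), α (a • p) = a • α p,
    (tmap k A W α h).comp w = w'.comp α}
  add_mem' := by
    rintro α β ⟨hα, cα⟩ ⟨hβ, cβ⟩
    refine ⟨fun a p => by simp [hα, hβ, smul_add], ?_⟩
    have he : ∀ h', tmap k A W (α + β) h' = tmap k A W α hα + tmap k A W β hβ := by
      intro h'
      apply LinearMap.ext
      intro x
      obtain ⟨y, rfl⟩ := Submodule.Quotient.mk_surjective _ x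
      simp [tmap, Submodule.mapQ_apply]
    rw [he]
    ext p
    have h1 := LinearMap.congr_fun cα p
    have h2 := LinearMap.congr_fun cβ p
    simp only [LinearMap.add_apply, LinearMap.comp_apply] at *
    rw [h1, h2, map_add]
  zero_mem' := by
    refine ⟨fun a p => by simp, ?_⟩
    have he : ∀ h', tmap k A W (0 : P →ₗ[k] P') h' = 0 := by
      intro h'
      apply LinearMap.ext
      intro x
      obtain ⟨y, rfl⟩ := Submodule.Quotient.mk_surjective _ x
      simp [tmap, Submodule.mapQ_apply]
    rw [he]
    ext p; simp
  smul_mem' := by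
    rintro c α ⟨hα, cα⟩
    refine ⟨fun a p => by simp only [LinearMap.smul_apply, hα]; rw [ksmul_comm k A], ?_⟩
    have he : ∀ h', tmap k A W (c • α) h' = c • tmap k A W α hα := by
      intro h'
      apply LinearMap.ext
      intro x
      obtain ⟨y, rfl⟩ := Submodule.Quotient.mk_surjective _ x
      simp [tmap, Submodule.mapQ_apply]
    rw [he]
    ext p
    have h1 := LinearMap.congr_fun cα p
    simp only [LinearMap.smul_apply, LinearMap.comp_apply] at *
    rw [h1, map_smul]

/-- `w` is an element of the bimodule `W` over `P`, i.e. `w : P → W ⊗_A P` is `A`-linear. -/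
def IsEl (w : P →ₗ[k] WT k A W P) : Prop :=
  ∀ (a : A) (p : P), w (a • p) = tau k A W P a (w p)

variable {Q : Type} [AddCommGroup Q] [Module k Q] [Module A Q] [IsScalarTower k A Q]

/-- The direct sum `w ⊕ v` of two elements, an element over `P × Q`. -/
def dsumEl (w : P →ₗ[k] WT k A W P) (v : Q →ₗ[k] WT k A W Q) :
    (P × Q) →ₗ[k] WT k A W (P × Q) :=
  (tmap k A W (LinearMap.inl k P Q) (fun a p => by ext <;> simp)).comp
      (w.comp (LinearMap.fst k P Q))
    + (tmap k A W (LinearMap.inr k P Q) (fun a q => by ext <;> simp)).comp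
      (v.comp (LinearMap.snd k P Q))

end WEl
section Helpers

variable {k A W : Type} [Field k] [Ring A] [Algebra k A]
  [AddCommGroup W] [Module k W] [Module A W] [Module Aᵐᵒᵖ W]
  [SMulCommClass A Aᵐᵒᵖ W] [IsScalarTower k A W]

variable {P : Type} [AddCommGroup P] [Module k P] [Module A P] [IsScalarTower k A P]
variable {P' : Type} [AddCommGroup P'] [Module k P'] [Module A P'] [IsScalarTower k A P']
variable {P'' : Type} [AddCommGroup P''] [Module k P''] [Module A P''] [IsScalarTower k A P'']
variable {Q : Type} [AddCommGroup Q] [Module k Q] [Module A Q] [IsScalarTower k A Q]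

lemma tmap_tmap (α : P →ₗ[k] P') (hα : ∀ (a : A) (p : P), α (a • p) = a • α p)
    (β : P' →ₗ[k] P'') (hβ : ∀ (a : A) (p : P'), β (a • p) = a • β p)
    (h : ∀ (a : A) (p : P), (β ∘ₗ α) (a • p) = a • (β ∘ₗ α) p) (x : WT k A W P) :
    tmap k A W β hβ (tmap k A W α hα x) = tmap k A W (β ∘ₗ α) h x := by
  obtain ⟨y, rfl⟩ := Submodule.Quotient.mk_surjective _ x
  simp [tmap, Submodule.mapQ_apply, LinearMap.lTensor_comp]

lemma tmap_congr {α α' : P →ₗ[k] P'} (hαα' : α = α')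
    (hα : ∀ (a : A) (p : P), α (a • p) = a • α p)
    (hα' : ∀ (a : A) (p : P), α' (a • p) = a • α' p) :
    tmap k A W α hα = tmap k A W α' hα' := by subst hαα'; rfl

lemma tmap_id (h : ∀ (a : A) (p : P), (LinearMap.id : P →ₗ[k] P) (a • p) = a • (LinearMap.id : P →ₗ[k] P) p) :
    tmap k A W (LinearMap.id : P →ₗ[k] P) h = LinearMap.id := by
  apply LinearMap.ext
  intro x
  obtain ⟨y, rfl⟩ := Submodule.Quotient.mk_surjective _ x
  simp [tmap, Submodule.mapQ_apply]

lemma tmap_zero (h : ∀ (a : A) (p : P), (0 : P →ₗ[k] P') (a • p) = a • (0 : P →ₗ[k] P') p) :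
    tmap k A W (0 : P →ₗ[k] P') h = 0 := by
  apply LinearMap.ext
  intro x
  obtain ⟨y, rfl⟩ := Submodule.Quotient.mk_surjective _ x
  simp [tmap, Submodule.mapQ_apply]

lemma homW_comp {v : Q →ₗ[k] WT k A W Q} {w : P →ₗ[k] WT k A W P} {u : P' →ₗ[k] WT k A W P'}
    {φ : Q →ₗ[k] P} {ψ : P →ₗ[k] P'}
    (hφ : φ ∈ HomW k A W v w) (hψ : ψ ∈ HomW k A W w u) :
    ψ ∘ₗ φ ∈ HomW k A W v u := by
  obtain ⟨h1, h2⟩ := hφ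
  obtain ⟨h3, h4⟩ := hψ
  refine ⟨fun a q => by simp only [LinearMap.comp_apply, h1, h3], ?_⟩
  ext q
  have e1 := LinearMap.congr_fun h2 q
  have e2 := LinearMap.congr_fun h4 (φ q)
  simp only [LinearMap.comp_apply] at e1 e2 ⊢
  rw [← tmap_tmap φ h1 ψ h3, e1, e2]

lemma homW_id (w : P →ₗ[k] WT k A W P) : LinearMap.id ∈ HomW k A W w w := by
  refine ⟨fun a p => rfl, ?_⟩
  ext p
  simp [tmap_id]

end Helpers
section Helpers2

variable {k A W : Type} [Field k] [Ring A] [Algebra k A]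
  [AddCommGroup W] [Module k W] [Module A W] [Module Aᵐᵒᵖ W]
  [SMulCommClass A Aᵐᵒᵖ W] [IsScalarTower k A W]

variable {P : Type} [AddCommGroup P] [Module k P] [Module A P] [IsScalarTower k A P]
variable {Q : Type} [AddCommGroup Q] [Module k Q] [Module A Q] [IsScalarTower k A Q]

lemma homW_inl (w : P →ₗ[k] WT k A W P) (v : Q →ₗ[k] WT k A W Q) :
    LinearMap.inl k P Q ∈ HomW k A W w (dsumEl k A W w v) := by
  refine ⟨fun a p => by ext <;> simp, ?_⟩
  ext p
  simp [dsumEl]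

lemma homW_inr (w : P →ₗ[k] WT k A W P) (v : Q →ₗ[k] WT k A W Q) :
    LinearMap.inr k P Q ∈ HomW k A W v (dsumEl k A W w v) := by
  refine ⟨fun a p => by ext <;> simp, ?_⟩
  ext q
  simp [dsumEl]

lemma homW_fst (w : P →ₗ[k] WT k A W P) (v : Q →ₗ[k] WT k A W Q) :
    LinearMap.fst k P Q ∈ HomW k A W (dsumEl k A W w v) w := by
  refine ⟨fun a p => by simp, ?_⟩
  apply LinearMap.ext; intro x
  simp only [dsumEl, LinearMap.comp_apply, LinearMap.add_apply, map_add, LinearMap.fst_apply]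
  rw [tmap_tmap (LinearMap.inl k P Q) _ (LinearMap.fst k P Q) (fun a p => by simp)
      (fun a p => by simp),
    tmap_tmap (LinearMap.inr k P Q) _ (LinearMap.fst k P Q) (fun a p => by simp)
      (fun a p => by simp)]
  erw [tmap_congr (show (LinearMap.fst k P Q ∘ₗ LinearMap.inl k P Q) = LinearMap.id by ext; simp)
      _ (fun a p => rfl),
    tmap_congr (show (LinearMap.fst k P Q ∘ₗ LinearMap.inr k P Q) = 0 by ext; simp)
      _ (fun a p => by simp),
    tmap_id, tmap_zero]
  simp

lemma homW_snd (w : P →ₗ[k] WT k A W P) (v : Q →ₗ[k] WT k A W Q) :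
    LinearMap.snd k P Q ∈ HomW k A W (dsumEl k A W w v) v := by
  refine ⟨fun a p => by simp, ?_⟩
  apply LinearMap.ext; intro x
  simp only [dsumEl, LinearMap.comp_apply, LinearMap.add_apply, map_add, LinearMap.snd_apply]
  rw [tmap_tmap (LinearMap.inl k P Q) _ (LinearMap.snd k P Q) (fun a p => by simp)
      (fun a p => by simp),
    tmap_tmap (LinearMap.inr k P Q) _ (LinearMap.snd k P Q) (fun a p => by simp)
      (fun a p => by simp)]
  erw [tmap_congr (show (LinearMap.snd k P Q ∘ₗ LinearMap.inr k P Q) = LinearMap.id by ext; simp)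
      _ (fun a p => rfl),
    tmap_congr (show (LinearMap.snd k P Q ∘ₗ LinearMap.inl k P Q) = 0 by ext; simp)
      _ (fun a p => by simp),
    tmap_id, tmap_zero]
  simp

end Helpers2
section Helpers3

variable {k A W : Type} [Field k] [Ring A] [Algebra k A]
  [AddCommGroup W] [Module k W] [Module A W] [Module Aᵐᵒᵖ W]
  [SMulCommClass A Aᵐᵒᵖ W] [IsScalarTower k A W]

variable {P : Type} [AddCommGroup P] [Module k P] [Module A P] [IsScalarTower k A P]
variable {P' : Type} [AddCommGroup P'] [Module k P'] [Module A P'] [IsScalarTower k A P']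
variable {P'' : Type} [AddCommGroup P''] [Module k P''] [Module A P''] [IsScalarTower k A P'']
variable {Q : Type} [AddCommGroup Q] [Module k Q] [Module A Q] [IsScalarTower k A Q]

/-- Factoring a morphism through the kernel: if `β ∘ φ = 0`, then `φ` factors as `α ∘ (ρ ∘ φ)`
with `ρ ∘ φ` a morphism into `w'`. -/
lemma factor_ker
    {w : P →ₗ[k] WT k A W P} {w' : P' →ₗ[k] WT k A W P'}
    {α : P' →ₗ[k] P} (hα : α ∈ HomW k A W w' w)
    {β : P →ₗ[k] P''}
    (ρ : P →ₗ[k] P') (hρA : ∀ (a : A) (p : P), ρ (a • p) = a • ρ p)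
    (hρ1 : ∀ p', ρ (α p') = p') (hρ2 : ∀ p, β p = 0 → α (ρ p) = p)
    {v : Q →ₗ[k] WT k A W Q} {φ : Q →ₗ[k] P}
    (hφ : φ ∈ HomW k A W v w) (h0 : β ∘ₗ φ = 0) :
    ρ ∘ₗ φ ∈ HomW k A W v w' ∧ α ∘ₗ (ρ ∘ₗ φ) = φ := by
  obtain ⟨hα1, hα2⟩ := hα
  obtain ⟨hφ1, hφ2⟩ := hφ
  have hζ : ∀ q, β (φ q) = 0 := fun q => LinearMap.congr_fun h0 q
  have hfac : ∀ q, α (ρ (φ q)) = φ q := fun q => hρ2 _ (hζ q)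
  constructor
  · refine ⟨fun a q => by simp only [LinearMap.comp_apply, hφ1, hρA], ?_⟩
    apply LinearMap.ext; intro q
    simp only [LinearMap.comp_apply]
    rw [← tmap_tmap φ hφ1 ρ hρA]
    have e1 := LinearMap.congr_fun hφ2 q
    simp only [LinearMap.comp_apply] at e1
    rw [e1]
    -- now : tmap ρ (w (φ q)) = w' (ρ (φ q))
    have e2 := LinearMap.congr_fun hα2 (ρ (φ q))
    simp only [LinearMap.comp_apply] at e2
    rw [← hfac q, ← e2, tmap_tmap α hα1 ρ hρA (fun a p => by
      simp only [LinearMap.comp_apply, hα1, hρA]),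
      tmap_congr (show (ρ ∘ₗ α) = LinearMap.id by ext p'; simp [hρ1]) _ (fun a p => rfl),
      tmap_id, hfac q]
    simp
  · apply LinearMap.ext; intro q
    simp only [LinearMap.comp_apply]
    exact hfac q

/-- Covariant left-exactness dimension bound. -/
lemma cov_bound
    [Module.Finite k P] [Module.Finite k P'] [Module.Finite k P''] [Module.Finite k Q]
    {w : P →ₗ[k] WT k A W P} {w' : P' →ₗ[k] WT k A W P'} {w'' : P'' →ₗ[k] WT k A W P''}
    {α : P' →ₗ[k] P} (hα : α ∈ HomW k A W w' w)
    {β : P →ₗ[k] P''} (hβ : β ∈ HomW k A W w w'')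
    (ρ : P →ₗ[k] P') (hρA : ∀ (a : A) (p : P), ρ (a • p) = a • ρ p)
    (hρ1 : ∀ p', ρ (α p') = p') (hρ2 : ∀ p, β p = 0 → α (ρ p) = p)
    (v : Q →ₗ[k] WT k A W Q)
    (forb : Q →ₗ[k] P'') (hforb : forb ∈ HomW k A W v w'')
    (hmiss : ∀ φ : Q →ₗ[k] P, φ ∈ HomW k A W v w → β ∘ₗ φ ≠ forb) :
    Module.finrank k (HomW k A W v w)
      < Module.finrank k (HomW k A W v w') + Module.finrank k (HomW k A W v w'') := by
  classical
  -- the composition map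
  set f : ↥(HomW k A W v w) →ₗ[k] ↥(HomW k A W v w'') :=
    { toFun := fun φ => ⟨β ∘ₗ φ.1, homW_comp φ.2 hβ⟩
      map_add' := by intro x y; apply Subtype.ext; simp [LinearMap.comp_add]
      map_smul' := by intro c x; apply Subtype.ext; simp [LinearMap.comp_smul] } with hf
  have hrn := LinearMap.finrank_range_add_finrank_ker f
  -- kernel bound
  have hker : Module.finrank k ↥(LinearMap.ker f) ≤ Module.finrank k (HomW k A W v w') := by
    set g : ↥(LinearMap.ker f) →ₗ[k] ↥(HomW k A W v w') :=
      { toFun := fun φ => ⟨ρ ∘ₗ (φ.1.1 : Q →ₗ[k] P),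
          (factor_ker hα ρ hρA hρ1 hρ2 φ.1.2 (by
            have := φ.2
            rw [LinearMap.mem_ker] at this
            exact congrArg Subtype.val this)).1⟩
        map_add' := by intro x y; apply Subtype.ext; simp [LinearMap.comp_add]
        map_smul' := by intro c x; apply Subtype.ext; simp [LinearMap.comp_smul] } with hg
    have hginj : Function.Injective g := by
      intro x y hxy
      have hx0 : β ∘ₗ (x.1.1 : Q →ₗ[k] P) = 0 := by
        have := x.2; rw [LinearMap.mem_ker] at this; exact congrArg Subtype.val this
      have hy0 : β ∘ₗ (y.1.1 : Q →ₗ[k] P) = 0 := by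
        have := y.2; rw [LinearMap.mem_ker] at this; exact congrArg Subtype.val this
      have hxy' : ρ ∘ₗ (x.1.1 : Q →ₗ[k] P) = ρ ∘ₗ (y.1.1 : Q →ₗ[k] P) :=
        congrArg Subtype.val hxy
      apply Subtype.ext; apply Subtype.ext
      apply LinearMap.ext; intro q
      have e1 := (factor_ker hα ρ hρA hρ1 hρ2 x.1.2 hx0).2
      have e2 := (factor_ker hα ρ hρA hρ1 hρ2 y.1.2 hy0).2
      calc (x.1.1 : Q →ₗ[k] P) q = α (ρ ((x.1.1 : Q →ₗ[k] P) q)) := by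
              have := LinearMap.congr_fun e1 q
              simp only [LinearMap.comp_apply] at this
              exact this.symm
        _ = α (ρ ((y.1.1 : Q →ₗ[k] P) q)) := by
              have := LinearMap.congr_fun hxy' q
              simp only [LinearMap.comp_apply] at this
              rw [this]
        _ = (y.1.1 : Q →ₗ[k] P) q := by
              have := LinearMap.congr_fun e2 q
              simp only [LinearMap.comp_apply] at this
              exact this
    exact LinearMap.finrank_le_finrank_of_injective hginj
  -- range bound, strict
  have hrange : Module.finrank k ↥(LinearMap.range f)
      < Module.finrank k (HomW k A W v w'') := by
    apply Submodule.finrank_lt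
    intro htop
    have : (⟨forb, hforb⟩ : ↥(HomW k A W v w'')) ∈ LinearMap.range f := by
      rw [htop]; trivial
    obtain ⟨φ, hφ⟩ := this
    exact hmiss φ.1 φ.2 (congrArg Subtype.val hφ)
  omega

end Helpers3
section Helpers4

variable {k A W : Type} [Field k] [Ring A] [Algebra k A]
  [AddCommGroup W] [Module k W] [Module A W] [Module Aᵐᵒᵖ W]
  [SMulCommClass A Aᵐᵒᵖ W] [IsScalarTower k A W]

variable {P : Type} [AddCommGroup P] [Module k P] [Module A P] [IsScalarTower k A P]
variable {P' : Type} [AddCommGroup P'] [Module k P'] [Module A P'] [IsScalarTower k A P']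
variable {P'' : Type} [AddCommGroup P''] [Module k P''] [Module A P''] [IsScalarTower k A P'']
variable {Q : Type} [AddCommGroup Q] [Module k Q] [Module A Q] [IsScalarTower k A Q]

/-- Factoring a morphism through the cokernel. -/
lemma factor_coker
    {w : P →ₗ[k] WT k A W P} {w'' : P'' →ₗ[k] WT k A W P''}
    {α : P' →ₗ[k] P}
    {β : P →ₗ[k] P''} (hβ : β ∈ HomW k A W w w'') (hbsurj : Function.Surjective β)
    (σ : P'' →ₗ[k] P) (hσA : ∀ (a : A) (p : P''), σ (a • p) = a • σ p)
    (hsplit : ∀ p, ∃ p', α p' = p - σ (β p))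
    {u : Q →ₗ[k] WT k A W Q} {φ : P →ₗ[k] Q}
    (hφ : φ ∈ HomW k A W w u) (h0 : φ ∘ₗ α = 0) :
    φ ∘ₗ σ ∈ HomW k A W w'' u ∧ (φ ∘ₗ σ) ∘ₗ β = φ := by
  obtain ⟨hβ1, hβ2⟩ := hβ
  obtain ⟨hφ1, hφ2⟩ := hφ
  have hfac : ∀ p, φ (σ (β p)) = φ p := by
    intro p
    obtain ⟨p', hp'⟩ := hsplit p
    have h1 : φ (α p') = 0 := LinearMap.congr_fun h0 p'
    rw [hp', map_sub, sub_eq_zero] at h1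
    exact h1.symm
  constructor
  · refine ⟨fun a p => by simp only [LinearMap.comp_apply, hσA, hφ1], ?_⟩
    apply LinearMap.ext; intro p''
    obtain ⟨p, rfl⟩ := hbsurj p''
    simp only [LinearMap.comp_apply]
    have e1 := LinearMap.congr_fun hβ2 p
    simp only [LinearMap.comp_apply] at e1
    rw [← e1, tmap_tmap β hβ1 (φ ∘ₗ σ)
        (fun a p => by simp only [LinearMap.comp_apply, hσA, hφ1])
        (fun a p => by simp only [LinearMap.comp_apply, hβ1, hσA, hφ1]),
      tmap_congr (show ((φ ∘ₗ σ) ∘ₗ β) = φ from LinearMap.ext fun p0 => hfac p0) _ hφ1]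
    have e2 := LinearMap.congr_fun hφ2 p
    simp only [LinearMap.comp_apply] at e2
    rw [e2, hfac p]
  · exact LinearMap.ext fun p => hfac p

/-- Contravariant left-exactness dimension bound. -/
lemma contra_bound
    [Module.Finite k P] [Module.Finite k P'] [Module.Finite k P''] [Module.Finite k Q]
    {w : P →ₗ[k] WT k A W P} {w' : P' →ₗ[k] WT k A W P'} {w'' : P'' →ₗ[k] WT k A W P''}
    {α : P' →ₗ[k] P} (hα : α ∈ HomW k A W w' w)
    {β : P →ₗ[k] P''} (hβ : β ∈ HomW k A W w w'') (hbsurj : Function.Surjective β)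
    (σ : P'' →ₗ[k] P) (hσA : ∀ (a : A) (p : P''), σ (a • p) = a • σ p)
    (hsplit : ∀ p, ∃ p', α p' = p - σ (β p))
    (u : Q →ₗ[k] WT k A W Q) :
    Module.finrank k (HomW k A W w u)
      ≤ Module.finrank k (HomW k A W w'' u) + Module.finrank k (HomW k A W w' u) := by
  classical
  set F : ↥(HomW k A W w u) →ₗ[k] ↥(HomW k A W w' u) :=
    { toFun := fun φ => ⟨(φ.1 : P →ₗ[k] Q) ∘ₗ α, homW_comp hα φ.2⟩
      map_add' := by intro x y; apply Subtype.ext; simp [LinearMap.add_comp]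
      map_smul' := by intro c x; apply Subtype.ext; simp [LinearMap.smul_comp] } with hF
  have hrn := LinearMap.finrank_range_add_finrank_ker F
  have hker : Module.finrank k ↥(LinearMap.ker F)
      ≤ Module.finrank k (HomW k A W w'' u) := by
    set g : ↥(LinearMap.ker F) →ₗ[k] ↥(HomW k A W w'' u) :=
      { toFun := fun φ => ⟨(φ.1.1 : P →ₗ[k] Q) ∘ₗ σ,
          (factor_coker hβ hbsurj σ hσA hsplit φ.1.2 (by
            have := φ.2
            rw [LinearMap.mem_ker] at this
            exact congrArg Subtype.val this)).1⟩
        map_add' := by intro x y; apply Subtype.ext; simp [LinearMap.add_comp]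
        map_smul' := by intro c x; apply Subtype.ext; simp [LinearMap.smul_comp] } with hg
    have hginj : Function.Injective g := by
      intro x y hxy
      have hx0 : (x.1.1 : P →ₗ[k] Q) ∘ₗ α = 0 := by
        have := x.2; rw [LinearMap.mem_ker] at this; exact congrArg Subtype.val this
      have hy0 : (y.1.1 : P →ₗ[k] Q) ∘ₗ α = 0 := by
        have := y.2; rw [LinearMap.mem_ker] at this; exact congrArg Subtype.val this
      have hxy' : (x.1.1 : P →ₗ[k] Q) ∘ₗ σ = (y.1.1 : P →ₗ[k] Q) ∘ₗ σ :=
        congrArg Subtype.val hxy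
      have e1 := (factor_coker hβ hbsurj σ hσA hsplit x.1.2 hx0).2
      have e2 := (factor_coker hβ hbsurj σ hσA hsplit y.1.2 hy0).2
      apply Subtype.ext; apply Subtype.ext
      rw [← e1, ← e2, hxy']
    exact LinearMap.finrank_le_finrank_of_injective hginj
  have hrange : Module.finrank k ↥(LinearMap.range F)
      ≤ Module.finrank k (HomW k A W w' u) := Submodule.finrank_le _
  omega

/-- Lower bound for the endomorphism space of a direct sum. -/
lemma dsum_end_ge
    [Module.Finite k P] [Module.Finite k Q]
    (w : P →ₗ[k] WT k A W P) (v : Q →ₗ[k] WT k A W Q) :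
    Module.finrank k (HomW k A W w w) + Module.finrank k (HomW k A W w v)
      + Module.finrank k (HomW k A W v w) + Module.finrank k (HomW k A W v v)
      ≤ Module.finrank k (HomW k A W (dsumEl k A W w v) (dsumEl k A W w v)) := by
  classical
  set D := dsumEl k A W w v with hD
  set T : (↥(HomW k A W w w) × ↥(HomW k A W w v))
        × (↥(HomW k A W v w) × ↥(HomW k A W v v)) →ₗ[k] ↥(HomW k A W D D) :=
    { toFun := fun x =>
        ⟨LinearMap.inl k P Q ∘ₗ ((x.1.1 : P →ₗ[k] P) ∘ₗ LinearMap.fst k P Q)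
          + LinearMap.inr k P Q ∘ₗ ((x.1.2 : P →ₗ[k] Q) ∘ₗ LinearMap.fst k P Q)
          + LinearMap.inl k P Q ∘ₗ ((x.2.1 : Q →ₗ[k] P) ∘ₗ LinearMap.snd k P Q)
          + LinearMap.inr k P Q ∘ₗ ((x.2.2 : Q →ₗ[k] Q) ∘ₗ LinearMap.snd k P Q),
        add_mem (add_mem (add_mem
          (homW_comp (homW_comp (homW_fst w v) x.1.1.2) (homW_inl w v))
          (homW_comp (homW_comp (homW_fst w v) x.1.2.2) (homW_inr w v)))
          (homW_comp (homW_comp (homW_snd w v) x.2.1.2) (homW_inl w v)))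
          (homW_comp (homW_comp (homW_snd w v) x.2.2.2) (homW_inr w v))⟩
      map_add' := by
        intro x y; apply Subtype.ext
        simp only [Prod.fst_add, Prod.snd_add, Submodule.coe_add, LinearMap.add_comp,
          LinearMap.comp_add, Submodule.coe_smul]
        abel
      map_smul' := by
        intro c x; apply Subtype.ext
        simp only [Prod.smul_fst, Prod.smul_snd, Submodule.coe_smul, LinearMap.smul_comp,
          LinearMap.comp_smul, RingHom.id_apply]
        simp [smul_add] } with hT
  have key : ∀ x p q, ((T x : ↥(HomW k A W D D)) : (P × Q) →ₗ[k] P × Q) (p, q)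
      = ((x.1.1 : P →ₗ[k] P) p + (x.2.1 : Q →ₗ[k] P) q,
         (x.1.2 : P →ₗ[k] Q) p + (x.2.2 : Q →ₗ[k] Q) q) := by
    intro x p q
    simp [hT, Prod.ext_iff]
  have hTinj : Function.Injective T := by
    intro x y h
    have h' : ∀ p q, ((x.1.1 : P →ₗ[k] P) p + (x.2.1 : Q →ₗ[k] P) q,
         (x.1.2 : P →ₗ[k] Q) p + (x.2.2 : Q →ₗ[k] Q) q)
        = ((y.1.1 : P →ₗ[k] P) p + (y.2.1 : Q →ₗ[k] P) q,
         (y.1.2 : P →ₗ[k] Q) p + (y.2.2 : Q →ₗ[k] Q) q) := by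
      intro p q
      rw [← key x p q, ← key y p q, h]
    obtain ⟨⟨a1, b1⟩, c1, d1⟩ := x
    obtain ⟨⟨a2, b2⟩, c2, d2⟩ := y
    have ha : a1 = a2 := by
      apply Subtype.ext; apply LinearMap.ext; intro p
      have := (Prod.ext_iff.1 (h' p 0)).1
      simpa using this
    have hb : b1 = b2 := by
      apply Subtype.ext; apply LinearMap.ext; intro p
      have := (Prod.ext_iff.1 (h' p 0)).2
      simpa using this
    have hc : c1 = c2 := by
      apply Subtype.ext; apply LinearMap.ext; intro q
      have := (Prod.ext_iff.1 (h' 0 q)).1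
      simpa using this
    have hd : d1 = d2 := by
      apply Subtype.ext; apply LinearMap.ext; intro q
      have := (Prod.ext_iff.1 (h' 0 q)).2
      simpa using this
    simp [ha, hb, hc, hd]
  have := LinearMap.finrank_le_finrank_of_injective hTinj
  rw [Module.finrank_prod, Module.finrank_prod, Module.finrank_prod] at this
  omega

end Helpers4
section Helpers5

variable {k A W : Type} [Field k] [Ring A] [Algebra k A]
  [AddCommGroup W] [Module k W] [Module A W] [Module Aᵐᵒᵖ W]
  [SMulCommClass A Aᵐᵒᵖ W] [IsScalarTower k A W]

variable {P : Type} [AddCommGroup P] [Module k P] [Module A P] [IsScalarTower k A P]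
variable {P' : Type} [AddCommGroup P'] [Module k P'] [Module A P'] [IsScalarTower k A P']
variable {P'' : Type} [AddCommGroup P''] [Module k P''] [Module A P''] [IsScalarTower k A P'']
variable {Q : Type} [AddCommGroup Q] [Module k Q] [Module A Q] [IsScalarTower k A Q]

/-- Covariant left-exactness dimension bound, non-strict version. -/
lemma cov_bound_le
    [Module.Finite k P] [Module.Finite k P'] [Module.Finite k P''] [Module.Finite k Q]
    {w : P →ₗ[k] WT k A W P} {w' : P' →ₗ[k] WT k A W P'} {w'' : P'' →ₗ[k] WT k A W P''}
    {α : P' →ₗ[k] P} (hα : α ∈ HomW k A W w' w)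
    {β : P →ₗ[k] P''} (hβ : β ∈ HomW k A W w w'')
    (ρ : P →ₗ[k] P') (hρA : ∀ (a : A) (p : P), ρ (a • p) = a • ρ p)
    (hρ1 : ∀ p', ρ (α p') = p') (hρ2 : ∀ p, β p = 0 → α (ρ p) = p)
    (v : Q →ₗ[k] WT k A W Q) :
    Module.finrank k (HomW k A W v w)
      ≤ Module.finrank k (HomW k A W v w') + Module.finrank k (HomW k A W v w'') := by
  classical
  set f : ↥(HomW k A W v w) →ₗ[k] ↥(HomW k A W v w'') :=
    { toFun := fun φ => ⟨β ∘ₗ φ.1, homW_comp φ.2 hβ⟩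
      map_add' := by intro x y; apply Subtype.ext; simp [LinearMap.comp_add]
      map_smul' := by intro c x; apply Subtype.ext; simp [LinearMap.comp_smul] } with hf
  have hrn := LinearMap.finrank_range_add_finrank_ker f
  have hker : Module.finrank k ↥(LinearMap.ker f) ≤ Module.finrank k (HomW k A W v w') := by
    set g : ↥(LinearMap.ker f) →ₗ[k] ↥(HomW k A W v w') :=
      { toFun := fun φ => ⟨ρ ∘ₗ (φ.1.1 : Q →ₗ[k] P),
          (factor_ker hα ρ hρA hρ1 hρ2 φ.1.2 (by
            have := φ.2
            rw [LinearMap.mem_ker] at this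
            exact congrArg Subtype.val this)).1⟩
        map_add' := by intro x y; apply Subtype.ext; simp [LinearMap.comp_add]
        map_smul' := by intro c x; apply Subtype.ext; simp [LinearMap.comp_smul] } with hg
    have hginj : Function.Injective g := by
      intro x y hxy
      have hx0 : β ∘ₗ (x.1.1 : Q →ₗ[k] P) = 0 := by
        have := x.2; rw [LinearMap.mem_ker] at this; exact congrArg Subtype.val this
      have hy0 : β ∘ₗ (y.1.1 : Q →ₗ[k] P) = 0 := by
        have := y.2; rw [LinearMap.mem_ker] at this; exact congrArg Subtype.val this
      have hxy' : ρ ∘ₗ (x.1.1 : Q →ₗ[k] P) = ρ ∘ₗ (y.1.1 : Q →ₗ[k] P) :=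
        congrArg Subtype.val hxy
      have e1 := (factor_ker hα ρ hρA hρ1 hρ2 x.1.2 hx0).2
      have e2 := (factor_ker hα ρ hρA hρ1 hρ2 y.1.2 hy0).2
      apply Subtype.ext; apply Subtype.ext
      rw [← e1, ← e2, hxy']
    exact LinearMap.finrank_le_finrank_of_injective hginj
  have hrange : Module.finrank k ↥(LinearMap.range f)
      ≤ Module.finrank k (HomW k A W v w'') := Submodule.finrank_le _
  omega

end Helpers5
/-- in the bimodule category `W-el` of a finite dimensional central bimodule
over a finite dimensional algebra over an algebraically closed field, a non-split conflation
`ξ : w' → w → w''` yields a conflation `w' ⊕ w'' → w ⊕ w'' → w''`, and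
`dim End_W(w) < dim End_W(w' ⊕ w'')`. -/
theorem stmt6
    (k A W : Type) [Field k] [IsAlgClosed k] [Ring A] [Algebra k A] [FiniteDimensional k A]
    [AddCommGroup W] [Module k W] [Module A W] [Module Aᵐᵒᵖ W]
    [SMulCommClass A Aᵐᵒᵖ W] [IsScalarTower k A W] [FiniteDimensional k W]
    (hcentral : ∀ (c : k) (x : W), MulOpposite.op (algebraMap k A c) • x = c • x)
    (P P' P'' : Type)
    [AddCommGroup P] [Module k P] [Module A P] [IsScalarTower k A P]
    [AddCommGroup P'] [Module k P'] [Module A P'] [IsScalarTower k A P']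
    [AddCommGroup P''] [Module k P''] [Module A P''] [IsScalarTower k A P'']
    (hPfg : Module.Finite A P) (hPproj : Module.Projective A P)
    (hP'fg : Module.Finite A P') (hP'proj : Module.Projective A P')
    (hP''fg : Module.Finite A P'') (hP''proj : Module.Projective A P'')
    (w : P →ₗ[k] WT k A W P) (hw : IsEl k A W w)
    (w' : P' →ₗ[k] WT k A W P') (hw' : IsEl k A W w')
    (w'' : P'' →ₗ[k] WT k A W P'') (hw'' : IsEl k A W w'')
    (α : P' →ₗ[k] P) (hα : α ∈ HomW k A W w' w)
    (β : P →ₗ[k] P'') (hβ : β ∈ HomW k A W w w'')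
    (hainj : Function.Injective α) (hbsurj : Function.Surjective β)
    (hexact : LinearMap.range α = LinearMap.ker β)
    (hnonsplit : ¬ ∃ α' : P →ₗ[k] P', α' ∈ HomW k A W w w' ∧ α'.comp α = LinearMap.id) :
    (∃ (γ : (P' × P'') →ₗ[k] P × P'') (δ : (P × P'') →ₗ[k] P''),
      γ ∈ HomW k A W (dsumEl k A W w' w'') (dsumEl k A W w w'') ∧
      δ ∈ HomW k A W (dsumEl k A W w w'') w'' ∧
      Function.Injective γ ∧ Function.Surjective δ ∧
      LinearMap.range γ = LinearMap.ker δ) ∧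
    Module.finrank k (HomW k A W w w)
      < Module.finrank k (HomW k A W (dsumEl k A W w' w'') (dsumEl k A W w' w'')) := by
  classical
  haveI := hPfg; haveI := hP'fg; haveI := hP''fg
  haveI := hPproj; haveI := hP'proj; haveI := hP''proj
  haveI : Module.Finite k P := Module.Finite.trans A P
  haveI : Module.Finite k P' := Module.Finite.trans A P'
  haveI : Module.Finite k P'' := Module.Finite.trans A P''
  obtain ⟨hα1, hα2⟩ := id hα
  obtain ⟨hβ1, hβ2⟩ := id hβ
  -- A-linear bundlings of α and β
  set βA : P →ₗ[A] P'' := { toFun := β, map_add' := β.map_add, map_smul' := hβ1 } with hβAdef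
  set αA : P' →ₗ[A] P := { toFun := α, map_add' := α.map_add, map_smul' := hα1 } with hαAdef
  -- a section of β
  obtain ⟨σA, hσA0⟩ := Module.projective_lifting_property βA LinearMap.id
    (show Function.Surjective βA from hbsurj)
  set σ : P'' →ₗ[k] P := σA.restrictScalars k with hσdef
  have hσ1 : ∀ p'', β (σ p'') = p'' := fun p'' => LinearMap.congr_fun hσA0 p''
  have hσAlin : ∀ (a : A) (p'' : P''), σ (a • p'') = a • σ p'' := fun a p'' =>
    σA.map_smul a p''
  have hβα : ∀ p', β (α p') = 0 := by
    intro p'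
    have : α p' ∈ LinearMap.range α := ⟨p', rfl⟩
    rw [hexact] at this
    exact this
  have hsplit : ∀ p, ∃ p', α p' = p - σ (β p) := by
    intro p
    have hker : p - σ (β p) ∈ LinearMap.ker β := by
      simp [LinearMap.mem_ker, map_sub, hσ1]
    rw [← hexact] at hker
    exact hker
  -- a retraction of α
  have hainjA : Function.Injective αA := hainj
  set eA := LinearEquiv.ofInjective αA hainjA with heAdef
  set εA : P →ₗ[A] P := LinearMap.id - σA ∘ₗ βA with hεAdef
  have hmemA : ∀ p, εA p ∈ LinearMap.range αA := by
    intro p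
    obtain ⟨p', hp'⟩ := hsplit p
    exact ⟨p', hp'⟩
  set ρA : P →ₗ[A] P' := eA.symm.toLinearMap ∘ₗ
    (LinearMap.codRestrict (LinearMap.range αA) εA hmemA) with hρAdef
  set ρ : P →ₗ[k] P' := ρA.restrictScalars k with hρdef
  have hρAlin : ∀ (a : A) (p : P), ρ (a • p) = a • ρ p := fun a p => ρA.map_smul a p
  have hcoe : ∀ x : LinearMap.range αA, αA (eA.symm x) = (x : P) := by
    intro x
    rw [heAdef]
    exact LinearEquiv.ofInjective_symm_apply (f := αA) (h := hainjA) x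
  have hρ2 : ∀ p, β p = 0 → α (ρ p) = p := by
    intro p hp
    have : α (ρ p) = p - σ (β p) := hcoe _
    rw [hp, map_zero, sub_zero] at this
    exact this
  have hρ1 : ∀ p', ρ (α p') = p' := by
    intro p'
    apply hainj
    exact hρ2 (α p') (hβα p')
  constructor
  · -- the conflation w' ⊕ w'' → w ⊕ w'' → w''
    refine ⟨(LinearMap.inl k P P'' ∘ₗ (α ∘ₗ LinearMap.fst k P' P''))
        + (LinearMap.inr k P P'' ∘ₗ LinearMap.snd k P' P''),
      β ∘ₗ LinearMap.fst k P P'', ?_, ?_, ?_, ?_, ?_⟩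
    · exact add_mem
        (homW_comp (homW_comp (homW_fst w' w'') hα) (homW_inl w w''))
        (homW_comp (homW_snd w' w'') (homW_inr w w''))
    · exact homW_comp (homW_fst w w'') hβ
    · intro x y hxy
      simp only [LinearMap.add_apply, LinearMap.comp_apply, LinearMap.fst_apply,
        LinearMap.snd_apply, LinearMap.inl_apply, LinearMap.inr_apply,
        Prod.mk_add_mk, add_zero, zero_add, Prod.mk.injEq] at hxy
      obtain ⟨h1, h2⟩ := hxy
      exact Prod.ext (hainj h1) h2
    · intro p''
      obtain ⟨p, hp⟩ := hbsurj p''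
      exact ⟨(p, 0), hp⟩
    · apply le_antisymm
      · rintro x ⟨⟨p1, p2⟩, rfl⟩
        simp [LinearMap.mem_ker, hβα p1]
      · rintro ⟨p, p''⟩ hx
        have hx' : β p = 0 := hx
        have : p ∈ LinearMap.ker β := hx'
        rw [← hexact] at this
        obtain ⟨p1, hp1⟩ := this
        refine ⟨(p1, p''), ?_⟩
        simp [hp1]
  · -- the dimension inequality
    have hmiss : ∀ φ : P'' →ₗ[k] P, φ ∈ HomW k A W w'' w → β ∘ₗ φ ≠ LinearMap.id := by
      intro φ hφ hcontra
      set e : P →ₗ[k] P := LinearMap.id - φ ∘ₗ β with hedef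
      have hemem : e ∈ HomW k A W w w := sub_mem (homW_id w) (homW_comp hβ hφ)
      have he0 : β ∘ₗ e = 0 := by
        apply LinearMap.ext; intro p
        have hc := LinearMap.congr_fun hcontra (β p)
        simp only [LinearMap.comp_apply, LinearMap.id_apply] at hc
        simp [hedef, hc]
      obtain ⟨hψmem, hψfac⟩ := factor_ker hα ρ hρAlin hρ1 hρ2 hemem he0
      apply hnonsplit
      refine ⟨ρ ∘ₗ e, hψmem, ?_⟩
      apply LinearMap.ext; intro p'
      apply hainj
      have hfe := LinearMap.congr_fun hψfac (α p')
      simp only [LinearMap.comp_apply, LinearMap.id_apply] at hfe ⊢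
      rw [hfe]
      simp [hedef, hβα p']
    have I1 := contra_bound hα hβ hbsurj σ hσAlin hsplit w
    have I2 := cov_bound hα hβ ρ hρAlin hρ1 hρ2 w'' LinearMap.id (homW_id w'') hmiss
    have I3 := cov_bound_le hα hβ ρ hρAlin hρ1 hρ2 w'
    have I4 := dsum_end_ge (k := k) (A := A) (W := W) w' w''
    omega
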